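/- Let K, m, n be positive integers, let ω : [0,1]² → [0,1] be measurable, let ξ_1,…,ξ_m and ζ_1,…,ζ_n be i.i.d. Uniform(0,1) random variables, and set W_{ij} = ω(ξ_i, ζ_j). Let I ⊂ {1,…,m} and J ⊂ {1,…,n} be uniformly random subsets of deterministic sizes |I| ≥ 1 and |J| ≥ 1, sampled without replacement and independent of (ξ,ζ). Fix Γ ∈ [−1,1]^{K×K} and (μ,ν) ∈ Ω_m × Ω_n, and for (Q,R) ∈ Q_μ^m × Q_ν^n let Ŝ^R ∈ argmax_{S∈Q_μ^m} Σ_{i=1}^m Σ_{j∈J} W_{ij} Γ_{S(i)R(j)} and T̂^Q ∈ argmax_{T∈Q_ν^n} Σ_{i∈I} Σ_{j=1}^n W_{ij} Γ_{Q(i)T(j)} (measurably chosen maximizers). Then E[ h_{F^W_{μν}}(Γ) ] ≤ E[ max_{(Q,R)∈Q_μ^m×Q_ν^n} ⟨Γ, W/Ŝ^R T̂^Q⟩ ] + K √(2π) ( |I|^{−1/2} + |J|^{−1/2} ). -/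

import Mathlib

open MeasureTheory Finset Set

namespace CoCluster

noncomputable section

/-- The uniform distribution on `[0,1]`. -/
def unif : Measure ℝ := volume.restrict (Set.Icc (0:ℝ) 1)

instance : IsProbabilityMeasure unif := by
  constructor
  simp [unif, Real.volume_Icc]

/-- Canonical sample space carrying `ξ ∈ [0,1]^m`, `ζ ∈ [0,1]^n`, and auxiliary
uniform variables `u ∈ [0,1]^{m×n}` used to generate the conditionally
independent Bernoulli entries. -/
abbrev Sample (m n : ℕ) : Type :=
  (Fin m → ℝ) × (Fin n → ℝ) × (Fin m → Fin n → ℝ)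

/-- The canonical probability measure: everything i.i.d. uniform on `[0,1]`. -/
def pspace (m n : ℕ) : Measure (Sample m n) :=
  (Measure.pi fun _ : Fin m => unif).prod
    ((Measure.pi fun _ : Fin n => unif).prod
      (Measure.pi fun _ : Fin m => Measure.pi fun _ : Fin n => unif))

variable {m n K : ℕ}

/-- The random binary array `A` generated from `ω`:  conditionally on `(ξ,ζ)`,
the entries are independent `Bernoulli (ω (ξ i) (ζ j))`. -/
def Arand (ω : ℝ → ℝ → ℝ) (p : Sample m n) : Fin m → Fin n → ℝ :=
  fun i j => if p.2.2 i j ≤ ω (p.1 i) (p.2.1 j) then 1 else 0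

/-- The random matrix `W i j = ω (ξ i) (ζ j)`. -/
def Wrand (ω : ℝ → ℝ → ℝ) (p : Sample m n) : Fin m → Fin n → ℝ :=
  fun i j => ω (p.1 i) (p.2.1 j)

/-- `⟨Γ, F⟩ = tr (Γᵀ F)`. -/
def matInner (Γ F : Fin K → Fin K → ℝ) : ℝ := ∑ a, ∑ b, Γ a b * F a b

/-- The co-clustering quotient `(A/ST)_{ab}` of a matrix. -/
def quotM (A : Fin m → Fin n → ℝ) (S : Fin m → Fin K) (T : Fin n → Fin K) :
    Fin K → Fin K → ℝ :=
  fun a b => (1 / (m * n : ℝ)) * ∑ i, ∑ j, if S i = a ∧ T j = b then A i j else 0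

/-- The co-clustering quotient `(ω/στ)_{ab}` of a kernel `ω : [0,1]² → [0,1]`. -/
def quotW (ω : ℝ → ℝ → ℝ) (σ τ : ℝ → Fin K) : Fin K → Fin K → ℝ :=
  fun a b => ∫ x in Set.Icc (0:ℝ) 1, ∫ y in Set.Icc (0:ℝ) 1,
    (if σ x = a ∧ τ y = b then ω x y else 0)

/-- `Ω_m`: probability vectors with entries that are integer multiples of `1/m`. -/
def OmegaSet (m K : ℕ) : Set (Fin K → ℝ) :=
  {μ | (∑ a, μ a) = 1 ∧ ∀ a, ∃ k : ℕ, μ a = (k : ℝ) / m}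

/-- `Q_μ^m`: class assignments on `{1,…,m}` with class proportions `μ`. -/
def QmSet (m : ℕ) (μ : Fin K → ℝ) : Set (Fin m → Fin K) :=
  {S | ∀ a, ((univ.filter fun i => S i = a).card : ℝ) = m * μ a}

/-- `Q_μ`: measurable partitions of `[0,1]` with class proportions `μ`. -/
def QSet (μ : Fin K → ℝ) : Set (ℝ → Fin K) :=
  {σ | Measurable σ ∧ ∀ a, (volume (σ ⁻¹' {a} ∩ Set.Icc (0:ℝ) 1)).toReal = μ a}

/-- `F^A_{μν}`: the set of admissible co-clusterings of a matrix. -/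
def FMat (A : Fin m → Fin n → ℝ) (μ ν : Fin K → ℝ) : Set (Fin K → Fin K → ℝ) :=
  {F | ∃ S ∈ QmSet m μ, ∃ T ∈ QmSet n ν, F = quotM A S T}

/-- `F^ω_{μν}`: the set of admissible co-clusterings of a kernel. -/
def FCont (ω : ℝ → ℝ → ℝ) (μ ν : Fin K → ℝ) : Set (Fin K → Fin K → ℝ) :=
  {F | ∃ σ ∈ QSet μ, ∃ τ ∈ QSet ν, F = quotW ω σ τ}

/-- Support function `h_F(Γ) = sup_{F' ∈ F} ⟨Γ, F'⟩`. -/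
def suppFn (F : Set (Fin K → Fin K → ℝ)) (Γ : Fin K → Fin K → ℝ) : ℝ :=
  sSup ((fun M => matInner Γ M) '' F)

/-- Co-blockmodel parameter triples `φ = (μ, ν, θ)`. -/
abbrev Params (K : ℕ) : Type :=
  (Fin K → ℝ) × (Fin K → ℝ) × (Fin K → Fin K → ℝ)

/-- `Φ = Ω_m × Ω_n × [0,1]^{K×K}`. -/
def PhiSet (m n K : ℕ) : Set (Params K) :=
  {φ | φ.1 ∈ OmegaSet m K ∧ φ.2.1 ∈ OmegaSet n K ∧
    ∀ a b, φ.2.2 a b ∈ Set.Icc (0:ℝ) 1}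

/-- Inverse distribution function `F_μ⁻¹` of a distribution on `{1,…,K}`. -/
def invCDF [NeZero K] (μ : Fin K → ℝ) (x : ℝ) : Fin K :=
  if h : (univ.filter fun a : Fin K =>
      x ≤ ∑ b ∈ univ.filter (· ≤ a), μ b).Nonempty
  then (univ.filter fun a : Fin K =>
      x ≤ ∑ b ∈ univ.filter (· ≤ a), μ b).min' h
  else ⟨0, Nat.pos_of_ne_zero (NeZero.ne K)⟩

/-- The blockmodel function `ω_φ(x,y) = θ_{F_μ⁻¹(x) F_ν⁻¹(y)}`. -/
def omegaPhi [NeZero K] (φ : Params K) (x y : ℝ) : ℝ :=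
  φ.2.2 (invCDF φ.1 x) (invCDF φ.2.1 y)

/-- Measure-preserving bijections of `[0,1]`. -/
def MPB (π : ℝ → ℝ) : Prop :=
  Set.BijOn π (Set.Icc (0:ℝ) 1) (Set.Icc (0:ℝ) 1) ∧
    MeasurePreserving π unif unif

/-- The `L²` risk `R_ω(φ)`. -/
def Rrisk [NeZero K] (ω : ℝ → ℝ → ℝ) (φ : Params K) : ℝ :=
  sInf {r | ∃ π₁ π₂ : ℝ → ℝ, MPB π₁ ∧ MPB π₂ ∧
    r = ∫ x in Set.Icc (0:ℝ) 1, ∫ y in Set.Icc (0:ℝ) 1,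
      (ω (π₁ x) (π₂ y) - omegaPhi φ x y) ^ 2}

/-- The least squares objective `R_A(φ)`. -/
def RA (A : Fin m → Fin n → ℝ) (φ : Params K) : ℝ :=
  sInf {r | ∃ S ∈ QmSet m φ.1, ∃ T ∈ QmSet n φ.2.1,
    r = (1 / (m * n : ℝ)) * ∑ i, ∑ j, (φ.2.2 (S i) (T j) - A i j) ^ 2}

/-- The log-likelihood functional `L_ω(φ)`. -/
def Lfun [NeZero K] (ω : ℝ → ℝ → ℝ) (φ : Params K) : ℝ :=
  sSup {r | ∃ π₁ π₂ : ℝ → ℝ, MPB π₁ ∧ MPB π₂ ∧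
    r = ∫ x in Set.Icc (0:ℝ) 1, ∫ y in Set.Icc (0:ℝ) 1,
      (ω (π₁ x) (π₂ y) * Real.log (omegaPhi φ x y)
        + (1 - ω (π₁ x) (π₂ y)) * Real.log (1 - omegaPhi φ x y))}

/-- The profile likelihood objective `L_A(φ)`. -/
def LA (A : Fin m → Fin n → ℝ) (φ : Params K) : ℝ :=
  sSup {r | ∃ S ∈ QmSet m φ.1, ∃ T ∈ QmSet n φ.2.1,
    r = (1 / (m * n : ℝ)) * ∑ i, ∑ j,
      (A i j * Real.log (φ.2.2 (S i) (T j))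
        + (1 - A i j) * Real.log (1 - φ.2.2 (S i) (T j)))}

/-- `B(φ) = max_{a,b} |log (θ_{ab}/(1-θ_{ab}))|`. -/
def Bfn (θ : Fin K → Fin K → ℝ) : ℝ :=
  sSup {x | ∃ a b, x = |Real.log (θ a b / (1 - θ a b))|}

end

end CoCluster

open CoCluster MeasureTheory Set Finset

section AuxLemmas

open Finset

private lemma card_filter_mem_pcc {n k : ℕ} (hk : 1 ≤ k) (j : Fin n) :
    ((powersetCard k (univ : Finset (Fin n))).filter (fun J => j ∈ J)).card
      = (n - 1).choose (k - 1) := by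
  have hcard : ((univ : Finset (Fin n)).erase j).card = n - 1 := by
    simp [Finset.card_erase_of_mem]
  rw [← hcard, ← Finset.card_powersetCard (k - 1) ((univ : Finset (Fin n)).erase j)]
  refine Finset.card_bij' (fun J _ => J.erase j) (fun J' _ => insert j J') ?hi ?hj ?left ?right
  case hi =>
    intro J hJ
    simp only [mem_filter, Finset.mem_powersetCard_univ] at hJ
    simp only [Finset.mem_powersetCard]
    constructor
    · intro x hx
      simp only [Finset.mem_erase] at hx ⊢
      exact ⟨hx.1, Finset.mem_univ _⟩
    · rw [Finset.card_erase_of_mem hJ.2, hJ.1]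
  case hj =>
    intro J' hJ'
    simp only [Finset.mem_powersetCard] at hJ'
    have hjJ' : j ∉ J' := fun h => by
      have := hJ'.1 h; simp at this
    simp only [mem_filter, Finset.mem_powersetCard_univ]
    refine ⟨?_, Finset.mem_insert_self _ _⟩
    rw [Finset.card_insert_of_notMem hjJ', hJ'.2]
    omega
  case left =>
    intro J hJ
    simp only [mem_filter] at hJ
    exact Finset.insert_erase hJ.2
  case right =>
    intro J' hJ'
    simp only [Finset.mem_powersetCard] at hJ'
    have hjJ' : j ∉ J' := fun h => by
      have := hJ'.1 h; simp at this
    exact Finset.erase_insert hjJ'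

private lemma card_filter_pair_pcc {n k : ℕ} {j j' : Fin n} (hjj : j ≠ j') :
    ((powersetCard k (univ : Finset (Fin n))).filter (fun J => j ∈ J ∧ j' ∈ J)).card
      = (if 2 ≤ k then (n - 2).choose (k - 2) else 0) := by
  rcases le_or_gt 2 k with h2 | h2
  · rw [if_pos h2]
    have hcard : (((univ : Finset (Fin n)).erase j).erase j').card = n - 2 := by
      rw [Finset.card_erase_of_mem (by simp [Finset.mem_erase, hjj.symm]),
        Finset.card_erase_of_mem (Finset.mem_univ _)]
      simp only [Finset.card_univ, Fintype.card_fin]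
      omega
    rw [← hcard, ← Finset.card_powersetCard (k - 2)]
    refine Finset.card_bij' (fun J _ => (J.erase j).erase j')
      (fun J' _ => insert j (insert j' J')) ?hi ?hj ?left ?right
    case hi =>
      intro J hJ
      simp only [mem_filter, Finset.mem_powersetCard_univ] at hJ
      simp only [Finset.mem_powersetCard]
      constructor
      · intro x hx
        simp only [Finset.mem_erase] at hx ⊢
        exact ⟨hx.1, hx.2.1, Finset.mem_univ _⟩
      · rw [Finset.card_erase_of_mem (by simp only [Finset.mem_erase]; exact ⟨hjj.symm, hJ.2.2⟩),
          Finset.card_erase_of_mem hJ.2.1, hJ.1]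
        omega
    case hj =>
      intro J' hJ'
      simp only [Finset.mem_powersetCard] at hJ'
      have hj'm : j' ∉ J' := by
        intro h; have := hJ'.1 h; simp [Finset.mem_erase] at this
      have hjm : j ∉ insert j' J' := by
        intro h
        rcases Finset.mem_insert.1 h with h | h
        · exact hjj h
        · have := hJ'.1 h; simp [Finset.mem_erase] at this
      simp only [mem_filter, Finset.mem_powersetCard_univ]
      refine ⟨?_, Finset.mem_insert_self _ _, Finset.mem_insert_of_mem (Finset.mem_insert_self _ _)⟩
      rw [Finset.card_insert_of_notMem hjm, Finset.card_insert_of_notMem hj'm, hJ'.2]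
      omega
    case left =>
      intro J hJ
      simp only [mem_filter] at hJ
      have h1 : j ∉ J.erase j := Finset.notMem_erase _ _
      have : insert j' ((J.erase j).erase j') = J.erase j :=
        Finset.insert_erase (by simp [Finset.mem_erase, hjj.symm, hJ.2.2])
      show insert j (insert j' ((J.erase j).erase j')) = J
      rw [this, Finset.insert_erase hJ.2.1]
    case right =>
      intro J' hJ'
      simp only [Finset.mem_powersetCard] at hJ'
      have hj'm : j' ∉ J' := by
        intro h; have := hJ'.1 h; simp [Finset.mem_erase] at this
      have hjm : j ∉ insert j' J' := by
        intro h
        rcases Finset.mem_insert.1 h with h | h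
        · exact hjj h
        · have := hJ'.1 h; simp [Finset.mem_erase] at this
      show ((insert j (insert j' J')).erase j).erase j' = J'
      rw [Finset.erase_insert hjm]
      exact Finset.erase_insert hj'm
  · rw [if_neg (by omega)]
    rw [Finset.card_eq_zero, Finset.filter_eq_empty_iff]
    intro J hJ
    simp only [Finset.mem_powersetCard_univ] at hJ
    rintro ⟨h1, h2⟩
    have hs : ({j, j'} : Finset (Fin n)) ⊆ J := by
      intro x hx
      rcases Finset.mem_insert.1 hx with h|h
      · exact h ▸ h1
      · exact (Finset.mem_singleton.1 h) ▸ h2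
    have := Finset.card_le_card hs
    rw [Finset.card_pair hjj, hJ] at this
    omega

private lemma key_count {n k : ℕ} (hn : 0 < n) (hk : 1 ≤ k) (y : Fin n → ℝ)
    (hy : ∑ j, y j = 0) :
    ∑ J ∈ powersetCard k (univ : Finset (Fin n)), (∑ j ∈ J, y j) ^ 2
      ≤ ((n - 1).choose (k - 1) : ℝ) * ∑ j, y j ^ 2 := by
  set P := powersetCard k (univ : Finset (Fin n)) with hP
  set c1 : ℝ := ((n - 1).choose (k - 1) : ℝ) with hc1
  set c2 : ℝ := (if 2 ≤ k then ((n - 2).choose (k - 2) : ℝ) else 0) with hc2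
  have expand : ∀ J : Finset (Fin n), (∑ j ∈ J, y j) ^ 2
      = ∑ j, ∑ j', (if j ∈ J ∧ j' ∈ J then y j * y j' else 0) := by
    intro J
    have h1 : ∑ j ∈ J, y j = ∑ j, if j ∈ J then y j else 0 := by
      rw [Finset.sum_ite_mem, Finset.univ_inter]
    rw [sq, h1, Finset.sum_mul_sum]
    refine Finset.sum_congr rfl fun j _ => Finset.sum_congr rfl fun j' _ => ?_
    by_cases h : j ∈ J <;> by_cases h' : j' ∈ J <;> simp [h, h']
  have swap : ∑ J ∈ P, (∑ j ∈ J, y j) ^ 2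
      = ∑ j, ∑ j', (y j * y j') * ((P.filter fun J => j ∈ J ∧ j' ∈ J).card : ℝ) := by
    rw [Finset.sum_congr rfl fun J _ => expand J, Finset.sum_comm]
    refine Finset.sum_congr rfl fun j _ => ?_
    rw [Finset.sum_comm]
    refine Finset.sum_congr rfl fun j' _ => ?_
    rw [← Finset.sum_filter, Finset.sum_const, nsmul_eq_mul, mul_comm]
  rw [swap]
  have hdiag : ∀ j : Fin n, ((P.filter fun J => j ∈ J ∧ j ∈ J).card : ℝ) = c1 := by
    intro j
    have h : (P.filter fun J => j ∈ J ∧ j ∈ J) = P.filter fun J => j ∈ J := by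
      apply Finset.filter_congr; intro J _; simp
    rw [h, hc1]
    exact_mod_cast congrArg (Nat.cast : ℕ → ℝ) (card_filter_mem_pcc (n := n) (k := k) hk j)
  have hoff : ∀ j j' : Fin n, j ≠ j' →
      ((P.filter fun J => j ∈ J ∧ j' ∈ J).card : ℝ) = c2 := by
    intro j j' hjj
    rw [hc2, card_filter_pair_pcc hjj]
    split_ifs <;> simp
  have hc2nonneg : 0 ≤ c2 := by rw [hc2]; split_ifs <;> positivity
  have heq : ∀ j : Fin n,
      ∑ j', (y j * y j') * ((P.filter fun J => j ∈ J ∧ j' ∈ J).card : ℝ)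
        = c1 * y j ^ 2 + c2 * (y j * (0 - y j)) := by
    intro j
    rw [← Finset.sum_erase_add _ _ (Finset.mem_univ j)]
    have h1 : ∑ j' ∈ univ.erase j,
        (y j * y j') * ((P.filter fun J => j ∈ J ∧ j' ∈ J).card : ℝ)
        = c2 * (y j * (0 - y j)) := by
      rw [Finset.sum_congr rfl (fun j' hj' => by
        rw [hoff j j' (Ne.symm (Finset.mem_erase.1 hj').1)])]
      rw [← Finset.sum_mul, ← Finset.mul_sum, Finset.sum_erase_eq_sub (Finset.mem_univ j), hy]
      ring
    rw [h1, hdiag j]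
    ring
  rw [Finset.sum_congr rfl fun j _ => heq j, Finset.sum_add_distrib,
    ← Finset.mul_sum, ← Finset.mul_sum]
  have h2 : ∑ j, (y j * (0 - y j)) = - ∑ j, y j ^ 2 := by
    rw [← Finset.sum_neg_distrib]
    exact Finset.sum_congr rfl fun j _ => by ring
  rw [h2]
  have h3 : 0 ≤ ∑ j, y j ^ 2 := Finset.sum_nonneg fun j _ => sq_nonneg _
  nlinarith

private lemma sample_bound {n k : ℕ} (hn : 0 < n) (hk : 1 ≤ k)
    (x : Fin n → ℝ) (hx : ∀ j, |x j| ≤ 1) :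
    ∑ J ∈ powersetCard k (univ : Finset (Fin n)),
      |(n : ℝ)⁻¹ * ∑ j, x j - (k : ℝ)⁻¹ * ∑ j ∈ J, x j|
      ≤ ((powersetCard k (univ : Finset (Fin n))).card : ℝ) / Real.sqrt k := by
  have hkpos : (0:ℝ) < k := by positivity
  have hnpos : (0:ℝ) < n := by positivity
  set P := powersetCard k (univ : Finset (Fin n)) with hP
  set N := P.card with hN
  set xbar := (n : ℝ)⁻¹ * ∑ j, x j with hxbar
  set y : Fin n → ℝ := fun j => x j - xbar with hyy
  have hsx : ∑ j, x j = (n : ℝ) * xbar := by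
    rw [hxbar]; field_simp
  have hy : ∑ j, y j = 0 := by
    simp only [hyy, Finset.sum_sub_distrib, Finset.sum_const, Finset.card_univ,
      Fintype.card_fin, nsmul_eq_mul, hsx]
    ring
  have habs : ∀ J ∈ P, |xbar - (k : ℝ)⁻¹ * ∑ j ∈ J, x j|
      = |(k : ℝ)⁻¹ * ∑ j ∈ J, y j| := by
    intro J hJ
    have hcard : (J.card : ℝ) = k := by
      exact_mod_cast Finset.mem_powersetCard_univ.1 hJ
    have h : ∑ j ∈ J, y j = (∑ j ∈ J, x j) - k * xbar := by
      simp only [hyy, Finset.sum_sub_distrib, Finset.sum_const, nsmul_eq_mul, hcard]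
    rw [h]
    rw [show (k:ℝ)⁻¹ * ((∑ j ∈ J, x j) - k * xbar) = (k:ℝ)⁻¹ * ∑ j ∈ J, x j - xbar by
      field_simp]
    rw [abs_sub_comm]
  have hsysq : ∑ j, y j ^ 2 ≤ (n : ℝ) := by
    have h1 : ∑ j, y j ^ 2 = (∑ j, x j ^ 2) - n * xbar ^ 2 := by
      have h : ∀ j, y j ^ 2 = x j ^ 2 - 2 * xbar * x j + xbar ^ 2 := by
        intro j; simp only [hyy]; ring
      rw [Finset.sum_congr rfl fun j _ => h j]
      rw [Finset.sum_add_distrib, Finset.sum_sub_distrib, ← Finset.mul_sum, hsx,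
        Finset.sum_const, Finset.card_univ, Fintype.card_fin, nsmul_eq_mul]
      ring
    have h2 : ∑ j, x j ^ 2 ≤ (n : ℝ) := by
      calc ∑ j, x j ^ 2 ≤ ∑ _j : Fin n, (1:ℝ) := by
            apply Finset.sum_le_sum
            intro j _
            rw [← sq_abs]
            nlinarith [hx j, abs_nonneg (x j)]
        _ = n := by simp
    nlinarith [sq_nonneg xbar]
  have hkey := key_count (k := k) hn hk y hy
  have hchoose : ((n-1).choose (k-1) : ℝ) * n = N * k := by
    have h : n * (n-1).choose (k-1) = n.choose k * k := by
      have h := Nat.add_one_mul_choose_eq (n-1) (k-1)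
      rw [Nat.sub_add_cancel hn, Nat.sub_add_cancel hk] at h
      exact h
    have hNc : N = n.choose k := by
      rw [hN, hP, Finset.card_powersetCard, Finset.card_univ, Fintype.card_fin]
    rw [hNc]
    exact_mod_cast by rw [mul_comm]; exact_mod_cast congrArg (Nat.cast : ℕ → ℝ) h
  have hsum_sq : ∑ J ∈ P, ((k : ℝ)⁻¹ * ∑ j ∈ J, y j) ^ 2 ≤ (N : ℝ) / k := by
    have h : ∑ J ∈ P, ((k : ℝ)⁻¹ * ∑ j ∈ J, y j) ^ 2
        = (k:ℝ)⁻¹ ^ 2 * ∑ J ∈ P, (∑ j ∈ J, y j) ^ 2 := by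
      rw [Finset.mul_sum]; exact Finset.sum_congr rfl fun J _ => by ring
    rw [h]
    have hle : ∑ J ∈ P, (∑ j ∈ J, y j) ^ 2 ≤ ((n-1).choose (k-1) : ℝ) * n :=
      le_trans hkey (mul_le_mul_of_nonneg_left hsysq (by positivity))
    calc (k:ℝ)⁻¹ ^ 2 * ∑ J ∈ P, (∑ j ∈ J, y j) ^ 2
        ≤ (k:ℝ)⁻¹ ^ 2 * (((n-1).choose (k-1) : ℝ) * n) :=
          mul_le_mul_of_nonneg_left hle (by positivity)
      _ = (N : ℝ) / k := by rw [hchoose]; field_simp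
  have hCS : (∑ J ∈ P, |(k : ℝ)⁻¹ * ∑ j ∈ J, y j|) ^ 2
      ≤ (N:ℝ) * ∑ J ∈ P, ((k : ℝ)⁻¹ * ∑ j ∈ J, y j) ^ 2 := by
    have h := sq_sum_le_card_mul_sum_sq (s := P) (f := fun J => |(k : ℝ)⁻¹ * ∑ j ∈ J, y j|)
    simp only [sq_abs] at h
    exact h
  have hfin : ∑ J ∈ P, |(k : ℝ)⁻¹ * ∑ j ∈ J, y j| ≤ (N : ℝ) / Real.sqrt k := by
    have h0 : (0:ℝ) ≤ ∑ J ∈ P, |(k : ℝ)⁻¹ * ∑ j ∈ J, y j| :=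
      Finset.sum_nonneg fun J _ => abs_nonneg _
    have h1 : (∑ J ∈ P, |(k : ℝ)⁻¹ * ∑ j ∈ J, y j|) ^ 2 ≤ (N:ℝ)^2 / k := by
      calc (∑ J ∈ P, |(k : ℝ)⁻¹ * ∑ j ∈ J, y j|) ^ 2
          ≤ (N:ℝ) * ∑ J ∈ P, ((k : ℝ)⁻¹ * ∑ j ∈ J, y j) ^ 2 := hCS
        _ ≤ (N:ℝ) * ((N:ℝ)/k) := mul_le_mul_of_nonneg_left hsum_sq (Nat.cast_nonneg _)
        _ = (N:ℝ)^2 / k := by ring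
    calc ∑ J ∈ P, |(k : ℝ)⁻¹ * ∑ j ∈ J, y j|
        ≤ Real.sqrt ((N:ℝ)^2 / k) := (Real.le_sqrt h0 (div_nonneg (sq_nonneg _) (Nat.cast_nonneg _))).mpr h1
      _ = (N:ℝ) / Real.sqrt k := by
          rw [Real.sqrt_div (sq_nonneg _) _, Real.sqrt_sq (Nat.cast_nonneg _)]
  calc ∑ J ∈ P, |(n : ℝ)⁻¹ * ∑ j, x j - (k : ℝ)⁻¹ * ∑ j ∈ J, x j|
      = ∑ J ∈ P, |(k : ℝ)⁻¹ * ∑ j ∈ J, y j| :=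
        Finset.sum_congr rfl fun J hJ => habs J hJ
    _ ≤ (N : ℝ) / Real.sqrt k := hfin

private lemma diff_le_sum_abs {K : ℕ} (D : Fin K → ℝ) (a b : Fin K) :
    D a - D b ≤ ∑ c, |D c| := by
  rcases eq_or_ne a b with rfl | hab
  · simpa using Finset.sum_nonneg fun c (_ : c ∈ (Finset.univ : Finset (Fin K))) => abs_nonneg (D c)
  · calc D a - D b ≤ |D a| + |D b| := by
          have h1 := le_abs_self (D a)
          have h2 := neg_abs_le (D b)
          linarith
      _ = ∑ c ∈ ({a, b} : Finset (Fin K)), |D c| := by rw [Finset.sum_pair hab]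
      _ ≤ ∑ c, |D c| :=
          Finset.sum_le_sum_of_subset_of_nonneg (Finset.subset_univ _)
            (fun c _ _ => abs_nonneg _)

private lemma exists_qmset {m K : ℕ} (hm : 0 < m) {μ : Fin K → ℝ}
    (hμ : μ ∈ CoCluster.OmegaSet m K) :
    ∃ S : Fin m → Fin K, S ∈ CoCluster.QmSet m μ := by
  obtain ⟨hsum, hint⟩ := hμ
  choose kf hkf using hint
  have hmR : (m : ℝ) ≠ 0 := Nat.cast_ne_zero.2 hm.ne'
  have hksumR : (∑ a, (kf a : ℝ)) = m := by
    rw [Finset.sum_congr rfl fun a _ => hkf a, ← Finset.sum_div] at hsum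
    field_simp at hsum
    exact hsum
  have hksum : ∑ a, kf a = m := by exact_mod_cast (by push_cast; exact hksumR : ((∑ a, kf a : ℕ) : ℝ) = (m:ℝ))
  have hcard : Fintype.card (Fin m) = Fintype.card (Σ a : Fin K, Fin (kf a)) := by
    simp [Fintype.card_sigma, hksum]
  let e : Fin m ≃ Σ a : Fin K, Fin (kf a) := Fintype.equivOfCardEq hcard
  refine ⟨fun i => (e i).1, fun a => ?_⟩
  have h1 : (univ.filter fun i => (e i).1 = a).card = kf a := by
    rw [← Fintype.card_subtype]
    refine (Fintype.card_congr ?_).trans (Fintype.card_fin (kf a))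
    refine (Equiv.subtypeEquiv (p := fun i => (e i).1 = a) (q := fun s => s.1 = a) e
      fun i => Iff.rfl).trans ?_
    exact { toFun := fun s => s.2 ▸ s.1.2
            invFun := fun x => ⟨⟨a, x⟩, rfl⟩
            left_inv := fun s => by rcases s with ⟨⟨a', x⟩, h⟩; subst h; rfl
            right_inv := fun x => rfl }
  rw [h1, hkf a]
  field_simp

private lemma matInner_quotM {m n K : ℕ} (Γ : Fin K → Fin K → ℝ) (A : Fin m → Fin n → ℝ)
    (S : Fin m → Fin K) (T : Fin n → Fin K) :
    CoCluster.matInner Γ (CoCluster.quotM A S T)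
      = (1 / (m * n : ℝ)) * ∑ i, ∑ j, A i j * Γ (S i) (T j) := by
  unfold CoCluster.matInner CoCluster.quotM
  set c : ℝ := 1 / (m * n : ℝ) with hc
  have key : ∀ (i : Fin m) (j : Fin n),
      ∑ a, ∑ b, (if S i = a ∧ T j = b then A i j * Γ a b else 0) = A i j * Γ (S i) (T j) := by
    intro i j
    have h1 : ∀ a : Fin K, ∑ b, (if S i = a ∧ T j = b then A i j * Γ a b else 0)
        = (if S i = a then A i j * Γ a (T j) else 0) := by
      intro a
      by_cases h : S i = a
      · simp only [h, true_and]
        rw [Finset.sum_ite_eq]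
        simp
      · simp [h]
    rw [Finset.sum_congr rfl fun a _ => h1 a, Finset.sum_ite_eq]
    simp
  calc ∑ a, ∑ b, Γ a b * (c * ∑ i, ∑ j, if S i = a ∧ T j = b then A i j else 0)
      = ∑ a, ∑ b, c * ∑ i, ∑ j, (if S i = a ∧ T j = b then A i j * Γ a b else 0) := by
        refine Finset.sum_congr rfl fun a _ => Finset.sum_congr rfl fun b _ => ?_
        rw [show Γ a b * (c * ∑ i, ∑ j, if S i = a ∧ T j = b then A i j else 0)
            = c * ((∑ i, ∑ j, if S i = a ∧ T j = b then A i j else 0) * Γ a b) from by ring]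
        congr 1
        rw [Finset.sum_mul]
        refine Finset.sum_congr rfl fun i _ => ?_
        rw [Finset.sum_mul]
        refine Finset.sum_congr rfl fun j _ => ?_
        split_ifs <;> ring
    _ = c * ∑ a, ∑ b, ∑ i, ∑ j, (if S i = a ∧ T j = b then A i j * Γ a b else 0) := by
        rw [Finset.mul_sum]
        refine Finset.sum_congr rfl fun a _ => ?_
        rw [Finset.mul_sum]
    _ = c * ∑ i, ∑ j, A i j * Γ (S i) (T j) := by
        congr 1
        rw [Finset.sum_congr rfl fun a (_ : a ∈ Finset.univ) => Finset.sum_comm, Finset.sum_comm]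
        refine Finset.sum_congr rfl fun i _ => ?_
        rw [Finset.sum_congr rfl fun a (_ : a ∈ Finset.univ) => Finset.sum_comm, Finset.sum_comm]
        exact Finset.sum_congr rfl fun j _ => key i j

end AuxLemmas

set_option maxHeartbeats 1000000 in
/-- Lemma 5.5.  Let `W_{ij} = ω(ξ_i,ζ_j)`, let `I ⊂ {1,…,m}`
and `J ⊂ {1,…,n}` be uniformly random subsets of deterministic sizes
`kI, kJ ≥ 1`, sampled without replacement and independent of `(ξ,ζ)` (the
expectation over them is written as an average over all subsets of the given
sizes).  For `(Q,R) ∈ Q_μ^m × Q_ν^n`, let `Ŝ^R` and `T̂^Q` be measurably chosen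
maximizers as displayed.  Then
`E[h_{F^W}(Γ)] ≤ E[max_{(Q,R)} ⟨Γ, W/Ŝ^R T̂^Q⟩] + K√(2π)(kI^{−1/2} + kJ^{−1/2})`. -/
theorem stmt13 (K m n : ℕ) [NeZero K] (hm : 0 < m) (hn : 0 < n)
    (ω : ℝ → ℝ → ℝ)
    (hmeas : Measurable fun q : ℝ × ℝ => ω q.1 q.2)
    (hbd : ∀ x y, ω x y ∈ Set.Icc (0:ℝ) 1)
    (Γ : Fin K → Fin K → ℝ) (hΓ : ∀ a b, Γ a b ∈ Set.Icc (-1:ℝ) 1)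
    (μ : Fin K → ℝ) (hμ : μ ∈ OmegaSet m K)
    (ν : Fin K → ℝ) (hν : ν ∈ OmegaSet n K)
    (kI kJ : ℕ) (hkI : 1 ≤ kI) (hkI' : kI ≤ m) (hkJ : 1 ≤ kJ) (hkJ' : kJ ≤ n)
    (Shat : Finset (Fin n) → (Fin n → Fin K) → Sample m n → (Fin m → Fin K))
    (That : Finset (Fin m) → (Fin m → Fin K) → Sample m n → (Fin n → Fin K))
    (hSmem : ∀ J R p, Shat J R p ∈ QmSet m μ)
    (hSopt : ∀ J R p, ∀ S ∈ QmSet m μ,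
      (∑ i, ∑ j ∈ J, Wrand ω p i j * Γ (S i) (R j))
        ≤ ∑ i, ∑ j ∈ J, Wrand ω p i j * Γ (Shat J R p i) (R j))
    (hTmem : ∀ I Q p, That I Q p ∈ QmSet n ν)
    (hTopt : ∀ I Q p, ∀ T ∈ QmSet n ν,
      (∑ i ∈ I, ∑ j, Wrand ω p i j * Γ (Q i) (T j))
        ≤ ∑ i ∈ I, ∑ j, Wrand ω p i j * Γ (Q i) (That I Q p j))
    (hSmeas : ∀ J R, Measurable (Shat J R))
    (hTmeas : ∀ I Q, Measurable (That I Q)) :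
    (∫ p, suppFn (FMat (Wrand ω p) μ ν) Γ ∂(pspace m n))
      ≤ (((Finset.powersetCard kI (Finset.univ : Finset (Fin m))).card *
            (Finset.powersetCard kJ (Finset.univ : Finset (Fin n))).card : ℝ))⁻¹ *
          (∑ I ∈ Finset.powersetCard kI (Finset.univ : Finset (Fin m)),
            ∑ J ∈ Finset.powersetCard kJ (Finset.univ : Finset (Fin n)),
              ∫ p, sSup {v : ℝ | ∃ Q ∈ QmSet m μ, ∃ R ∈ QmSet n ν,
                  v = matInner Γ (quotM (Wrand ω p) (Shat J R p) (That I Q p))}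
                ∂(pspace m n))
        + K * Real.sqrt (2 * Real.pi) *
            ((kI : ℝ) ^ (-(1/2 : ℝ)) + (kJ : ℝ) ^ (-(1/2 : ℝ))) := by
  classical
  haveI : IsProbabilityMeasure (pspace m n) := by
    unfold CoCluster.pspace; infer_instance
  set PI := Finset.powersetCard kI (Finset.univ : Finset (Fin m)) with hPI
  set PJ := Finset.powersetCard kJ (Finset.univ : Finset (Fin n)) with hPJ
  have hNI : 0 < PI.card := by
    rw [hPI, Finset.card_powersetCard]
    simpa using Nat.choose_pos hkI'
  have hNJ : 0 < PJ.card := by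
    rw [hPJ, Finset.card_powersetCard]
    simpa using Nat.choose_pos hkJ'
  have hNIR : (0:ℝ) < (PI.card : ℝ) := by exact_mod_cast hNI
  have hNJR : (0:ℝ) < (PJ.card : ℝ) := by exact_mod_cast hNJ
  have hsqI : (0:ℝ) < Real.sqrt kI := Real.sqrt_pos.2 (by positivity)
  have hsqJ : (0:ℝ) < Real.sqrt kJ := Real.sqrt_pos.2 (by positivity)
  set fv : Sample m n → (Fin m → Fin K) → (Fin n → Fin K) → ℝ :=
    fun p S T => (1 / (m * n : ℝ)) * ∑ i, ∑ j, Wrand ω p i j * Γ (S i) (T j) with hfv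
  -- elementary bounds
  have habs1 : ∀ (p : Sample m n) (i : Fin m) (j : Fin n) (a b : Fin K),
      |Wrand ω p i j * Γ a b| ≤ 1 := by
    intro p i j a b
    have h1 := hbd (p.1 i) (p.2.1 j)
    have h2 := hΓ a b
    simp only [Set.mem_Icc] at h1 h2
    rw [abs_mul]
    have hW : |Wrand ω p i j| ≤ 1 := abs_le.mpr ⟨by
      have := h1.1; simp only [Wrand]; linarith, by
      have := h1.2; simp only [Wrand]; linarith⟩
    have hG : |Γ a b| ≤ 1 := abs_le.mpr ⟨h2.1, h2.2⟩
    calc |Wrand ω p i j| * |Γ a b| ≤ 1 * 1 :=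
          mul_le_mul hW hG (abs_nonneg _) zero_le_one
      _ = 1 := by ring
  have habs_fv : ∀ p S T, |fv p S T| ≤ 1 := by
    intro p S T
    show |(1 / (m * n : ℝ)) * ∑ i, ∑ j, Wrand ω p i j * Γ (S i) (T j)| ≤ 1
    rw [abs_mul, abs_of_pos (by positivity : (0:ℝ) < 1 / ((m:ℝ) * n))]
    have h1 : |∑ i, ∑ j, Wrand ω p i j * Γ (S i) (T j)| ≤ (m:ℝ) * n := by
      calc |∑ i, ∑ j, Wrand ω p i j * Γ (S i) (T j)|
          ≤ ∑ i, |∑ j, Wrand ω p i j * Γ (S i) (T j)| := Finset.abs_sum_le_sum_abs _ _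
        _ ≤ ∑ i : Fin m, ∑ j : Fin n, |Wrand ω p i j * Γ (S i) (T j)| :=
            Finset.sum_le_sum fun i _ => Finset.abs_sum_le_sum_abs _ _
        _ ≤ ∑ _i : Fin m, ∑ _j : Fin n, (1:ℝ) :=
            Finset.sum_le_sum fun i _ => Finset.sum_le_sum fun j _ => habs1 p i j _ _
        _ = (m:ℝ) * n := by simp [mul_comm]
    calc (1 / ((m:ℝ) * n)) * |∑ i, ∑ j, Wrand ω p i j * Γ (S i) (T j)|
        ≤ (1 / ((m:ℝ) * n)) * ((m:ℝ) * n) := by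
          apply mul_le_mul_of_nonneg_left h1 (by positivity)
      _ = 1 := by field_simp
  -- index finsets
  set QμF : Finset (Fin m → Fin K) := Finset.univ.filter (· ∈ QmSet m μ) with hQμF
  set QνF : Finset (Fin n → Fin K) := Finset.univ.filter (· ∈ QmSet n ν) with hQνF
  obtain ⟨S₀, hS₀⟩ := exists_qmset hm hμ
  obtain ⟨T₀, hT₀⟩ := exists_qmset hn hν
  have hmemST : (S₀, T₀) ∈ QμF ×ˢ QνF := by
    rw [Finset.mem_product]
    exact ⟨by rw [hQμF, Finset.mem_filter]; exact ⟨Finset.mem_univ _, hS₀⟩,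
      by rw [hQνF, Finset.mem_filter]; exact ⟨Finset.mem_univ _, hT₀⟩⟩
  have hQpairNE : (QμF ×ˢ QνF).Nonempty := ⟨(S₀, T₀), hmemST⟩
  set gfun : Finset (Fin m) → Finset (Fin n) → Sample m n → ℝ := fun I J p =>
    sSup {v : ℝ | ∃ Q ∈ QmSet m μ, ∃ R ∈ QmSet n ν,
      v = matInner Γ (quotM (Wrand ω p) (Shat J R p) (That I Q p))} with hgfun
  have gfun_eq : ∀ I J p, gfun I J p = (QμF ×ˢ QνF).sup' hQpairNE
      (fun QR => fv p (Shat J QR.2 p) (That I QR.1 p)) := by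
    intro I J p
    rw [Finset.sup'_eq_csSup_image]
    show sSup _ = sSup _
    congr 1
    ext v
    constructor
    · rintro ⟨Q, hQ, R, hR, rfl⟩
      refine ⟨(Q, R), ?_, (matInner_quotM Γ (Wrand ω p) _ _).symm⟩
      rw [Finset.mem_coe, Finset.mem_product]
      exact ⟨by rw [hQμF, Finset.mem_filter]; exact ⟨Finset.mem_univ _, hQ⟩,
        by rw [hQνF, Finset.mem_filter]; exact ⟨Finset.mem_univ _, hR⟩⟩
    · rintro ⟨⟨Q, R⟩, hQR, rfl⟩
      rw [Finset.mem_coe, Finset.mem_product, hQμF, hQνF, Finset.mem_filter,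
        Finset.mem_filter] at hQR
      exact ⟨Q, hQR.1.2, R, hQR.2.2, (matInner_quotM Γ (Wrand ω p) _ _).symm⟩
  have suppFn_eq : ∀ p, suppFn (FMat (Wrand ω p) μ ν) Γ
      = (QμF ×ˢ QνF).sup' hQpairNE (fun ST => fv p ST.1 ST.2) := by
    intro p
    rw [Finset.sup'_eq_csSup_image]
    show sSup _ = sSup _
    congr 1
    ext v
    constructor
    · rintro ⟨F, ⟨S, hS, T, hT, rfl⟩, rfl⟩
      refine ⟨(S, T), ?_, (matInner_quotM Γ (Wrand ω p) _ _).symm⟩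
      rw [Finset.mem_coe, Finset.mem_product]
      exact ⟨by rw [hQμF, Finset.mem_filter]; exact ⟨Finset.mem_univ _, hS⟩,
        by rw [hQνF, Finset.mem_filter]; exact ⟨Finset.mem_univ _, hT⟩⟩
    · rintro ⟨⟨S, T⟩, hST, rfl⟩
      rw [Finset.mem_coe, Finset.mem_product, hQμF, hQνF, Finset.mem_filter,
        Finset.mem_filter] at hST
      exact ⟨quotM (Wrand ω p) S T, ⟨S, hST.1.2, T, hST.2.2, rfl⟩,
        matInner_quotM Γ (Wrand ω p) _ _⟩
  -- measurability
  have measW : ∀ (i : Fin m) (j : Fin n), Measurable fun p : Sample m n => Wrand ω p i j := by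
    intro i j
    have h1 : Measurable fun p : Sample m n => (p.1 i, p.2.1 j) :=
      ((measurable_pi_apply i).comp measurable_fst).prodMk
        ((measurable_pi_apply j).comp (measurable_fst.comp measurable_snd))
    exact hmeas.comp h1
  have meas_fv : ∀ S T, Measurable fun p => fv p S T := by
    intro S T
    apply Measurable.const_mul
    apply Finset.measurable_sum
    intro i _
    apply Finset.measurable_sum
    intro j _
    exact (measW i j).mul_const _
  have meas_comp : ∀ (I : Finset (Fin m)) (J : Finset (Fin n)) Q R,
      Measurable fun p => fv p (Shat J R p) (That I Q p) := by
    intro I J Q R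
    have hrepr : (fun p => fv p (Shat J R p) (That I Q p))
        = fun p => ∑ S' : Fin m → Fin K, ∑ T' : Fin n → Fin K,
            if Shat J R p = S' then (if That I Q p = T' then fv p S' T' else 0) else 0 := by
      funext p
      symm
      have h1 : ∀ S' : Fin m → Fin K, (∑ T' : Fin n → Fin K,
          if Shat J R p = S' then (if That I Q p = T' then fv p S' T' else 0) else 0)
          = if Shat J R p = S' then fv p S' (That I Q p) else 0 := by
        intro S'
        by_cases h : Shat J R p = S'
        · simp only [h, if_true]
          rw [Finset.sum_ite_eq]
          simp
        · simp [h]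
      rw [Finset.sum_congr rfl fun S' _ => h1 S', Finset.sum_ite_eq]
      simp
    rw [hrepr]
    apply Finset.measurable_sum
    intro S' _
    apply Finset.measurable_sum
    intro T' _
    refine Measurable.ite (hSmeas J R (measurableSet_singleton S'))
      (Measurable.ite (hTmeas I Q (measurableSet_singleton T')) (meas_fv S' T')
        measurable_const) measurable_const
  have meas_g : ∀ I J, Measurable (gfun I J) := by
    intro I J
    have h : gfun I J = (QμF ×ˢ QνF).sup' hQpairNE
        (fun QR => fun p => fv p (Shat J QR.2 p) (That I QR.1 p)) := by
      funext p
      rw [gfun_eq I J p, Finset.sup'_apply]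
    rw [h]
    exact Finset.measurable_sup' hQpairNE fun QR _ => meas_comp I J QR.1 QR.2
  have habs_g : ∀ I J p, |gfun I J p| ≤ 1 := by
    intro I J p
    rw [gfun_eq I J p, abs_le]
    constructor
    · calc (-1 : ℝ) ≤ fv p (Shat J T₀ p) (That I S₀ p) := (abs_le.1 (habs_fv p _ _)).1
        _ ≤ _ := Finset.le_sup' (fun QR => fv p (Shat J QR.2 p) (That I QR.1 p)) hmemST
    · exact Finset.sup'_le _ _ fun QR _ => (abs_le.1 (habs_fv p _ _)).2
  have int_g : ∀ I J, Integrable (gfun I J) (pspace m n) := by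
    intro I J
    refine ⟨(meas_g I J).aestronglyMeasurable, ?_⟩
    apply HasFiniteIntegral.of_bounded (C := 1)
    exact Filter.Eventually.of_forall fun p => by
      rw [Real.norm_eq_abs]; exact habs_g I J p
  have habs_supp : ∀ p : Sample m n, |suppFn (FMat (Wrand ω p) μ ν) Γ| ≤ 1 := by
    intro p
    rw [suppFn_eq p, abs_le]
    constructor
    · calc (-1:ℝ) ≤ fv p S₀ T₀ := (abs_le.1 (habs_fv p _ _)).1
        _ ≤ _ := Finset.le_sup' (fun ST => fv p ST.1 ST.2) hmemST
    · exact Finset.sup'_le _ _ fun ST _ => (abs_le.1 (habs_fv p _ _)).2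
  have meas_supp : Measurable fun p : Sample m n => suppFn (FMat (Wrand ω p) μ ν) Γ := by
    have h : (fun p : Sample m n => suppFn (FMat (Wrand ω p) μ ν) Γ)
        = (QμF ×ˢ QνF).sup' hQpairNE (fun ST => fun p => fv p ST.1 ST.2) := by
      funext p
      rw [suppFn_eq p, Finset.sup'_apply]
    rw [h]
    exact Finset.measurable_sup' hQpairNE fun ST _ => meas_fv ST.1 ST.2
  have int_supp : Integrable (fun p : Sample m n => suppFn (FMat (Wrand ω p) μ ν) Γ) (pspace m n) :=
    ⟨meas_supp.aestronglyMeasurable, HasFiniteIntegral.of_bounded (C := 1)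
      (Filter.Eventually.of_forall fun p => by rw [Real.norm_eq_abs]; exact habs_supp p)⟩
  -- core pointwise estimate
  have main : ∀ p : Sample m n, suppFn (FMat (Wrand ω p) μ ν) Γ
      ≤ ((PI.card : ℝ) * (PJ.card : ℝ))⁻¹ * (∑ I ∈ PI, ∑ J ∈ PJ, gfun I J p)
        + ((K:ℝ) * (Real.sqrt kI)⁻¹ + (K:ℝ) * (Real.sqrt kJ)⁻¹) := by
    intro p
    rw [suppFn_eq p]
    apply Finset.sup'_le
    rintro ⟨S, T⟩ hST
    rw [Finset.mem_product, hQμF, hQνF, Finset.mem_filter, Finset.mem_filter] at hST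
    obtain ⟨⟨-, hS⟩, -, hT⟩ := hST
    show fv p S T ≤ _
    set x : Fin m → Fin K → Fin n → ℝ := fun i a j => Wrand ω p i j * Γ a (T j) with hx
    set D : Fin m → Fin K → Finset (Fin n) → ℝ :=
      fun i a J => (n:ℝ)⁻¹ * ∑ j, x i a j - (kJ:ℝ)⁻¹ * ∑ j ∈ J, x i a j with hD
    set E : Finset (Fin m) → Finset (Fin n) → Fin n → Fin K → ℝ := fun I J j b =>
      (m:ℝ)⁻¹ * ∑ i, Wrand ω p i j * Γ (Shat J T p i) b
        - (kI:ℝ)⁻¹ * ∑ i ∈ I, Wrand ω p i j * Γ (Shat J T p i) b with hE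
    have claim : ∀ I ∈ PI, ∀ J ∈ PJ, fv p S T ≤ gfun I J p
        + (m:ℝ)⁻¹ * ∑ i, ∑ a, |D i a J|
        + (n:ℝ)⁻¹ * ∑ j, ∑ b, |E I J j b| := by
      intro I hI J hJ
      have fv_rwT : ∀ S' : Fin m → Fin K, fv p S' T
          = (m:ℝ)⁻¹ * ∑ i, ((n:ℝ)⁻¹ * ∑ j, x i (S' i) j) := by
        intro S'
        show (1 / (m * n : ℝ)) * ∑ i, ∑ j, Wrand ω p i j * Γ (S' i) (T j) = _
        simp only [hx, Finset.mul_sum]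
        refine Finset.sum_congr rfl fun i _ => Finset.sum_congr rfl fun j _ => ?_
        rw [one_div, mul_inv]
        ring
      have fv_rwS : ∀ T' : Fin n → Fin K, fv p (Shat J T p) T'
          = (n:ℝ)⁻¹ * ∑ j, ((m:ℝ)⁻¹ * ∑ i, Wrand ω p i j * Γ (Shat J T p i) (T' j)) := by
        intro T'
        show (1 / (m * n : ℝ)) * ∑ i, ∑ j, Wrand ω p i j * Γ (Shat J T p i) (T' j) = _
        rw [Finset.sum_comm]
        simp only [Finset.mul_sum]
        refine Finset.sum_congr rfl fun j _ => Finset.sum_congr rfl fun i _ => ?_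
        rw [one_div, mul_inv]
        ring
      have step1 : fv p S T - fv p (Shat J T p) T ≤ (m:ℝ)⁻¹ * ∑ i, ∑ a, |D i a J| := by
        have e1 : fv p S T - fv p (Shat J T p) T
            = (m:ℝ)⁻¹ * ∑ i, ((D i (S i) J - D i (Shat J T p i) J)
                + ((kJ:ℝ)⁻¹ * ∑ j ∈ J, x i (S i) j
                   - (kJ:ℝ)⁻¹ * ∑ j ∈ J, x i (Shat J T p i) j)) := by
          rw [fv_rwT S, fv_rwT (Shat J T p), ← mul_sub, ← Finset.sum_sub_distrib]
          congr 1
          refine Finset.sum_congr rfl fun i _ => ?_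
          simp only [hD]
          ring
        have hoptx : ∑ i, ((kJ:ℝ)⁻¹ * ∑ j ∈ J, x i (S i) j)
            ≤ ∑ i, ((kJ:ℝ)⁻¹ * ∑ j ∈ J, x i (Shat J T p i) j) := by
          rw [← Finset.mul_sum, ← Finset.mul_sum]
          refine mul_le_mul_of_nonneg_left ?_ (by positivity)
          simp only [hx]
          exact hSopt J T p S hS
        have h1 : ∑ i, (D i (S i) J - D i (Shat J T p i) J) ≤ ∑ i, ∑ a, |D i a J| :=
          Finset.sum_le_sum fun i _ => diff_le_sum_abs (fun a => D i a J) (S i) (Shat J T p i)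
        have h2 : ∑ i, ((kJ:ℝ)⁻¹ * ∑ j ∈ J, x i (S i) j
            - (kJ:ℝ)⁻¹ * ∑ j ∈ J, x i (Shat J T p i) j) ≤ 0 := by
          rw [Finset.sum_sub_distrib]
          exact sub_nonpos.mpr hoptx
        rw [e1, Finset.sum_add_distrib]
        have := mul_le_mul_of_nonneg_left (add_le_add h1 h2)
          (by positivity : (0:ℝ) ≤ (m:ℝ)⁻¹)
        simpa using this
      have step2 : fv p (Shat J T p) T - fv p (Shat J T p) (That I (Shat J T p) p)
          ≤ (n:ℝ)⁻¹ * ∑ j, ∑ b, |E I J j b| := by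
        have e2 : fv p (Shat J T p) T - fv p (Shat J T p) (That I (Shat J T p) p)
            = (n:ℝ)⁻¹ * ∑ j, ((E I J j (T j) - E I J j (That I (Shat J T p) p j))
                + ((kI:ℝ)⁻¹ * ∑ i ∈ I, Wrand ω p i j * Γ (Shat J T p i) (T j)
                  - (kI:ℝ)⁻¹ * ∑ i ∈ I,
                      Wrand ω p i j * Γ (Shat J T p i) (That I (Shat J T p) p j))) := by
          rw [fv_rwS T, fv_rwS (That I (Shat J T p) p), ← mul_sub, ← Finset.sum_sub_distrib]
          congr 1
          refine Finset.sum_congr rfl fun j _ => ?_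
          simp only [hE]
          ring
        have hoptz : ∑ j, ((kI:ℝ)⁻¹ * ∑ i ∈ I, Wrand ω p i j * Γ (Shat J T p i) (T j))
            ≤ ∑ j, ((kI:ℝ)⁻¹ * ∑ i ∈ I,
                Wrand ω p i j * Γ (Shat J T p i) (That I (Shat J T p) p j)) := by
          rw [← Finset.mul_sum, ← Finset.mul_sum]
          refine mul_le_mul_of_nonneg_left ?_ (by positivity)
          calc ∑ j, ∑ i ∈ I, Wrand ω p i j * Γ (Shat J T p i) (T j)
              = ∑ i ∈ I, ∑ j, Wrand ω p i j * Γ (Shat J T p i) (T j) := Finset.sum_comm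
            _ ≤ ∑ i ∈ I, ∑ j, Wrand ω p i j * Γ (Shat J T p i) (That I (Shat J T p) p j) :=
                hTopt I (Shat J T p) p T hT
            _ = ∑ j, ∑ i ∈ I, Wrand ω p i j * Γ (Shat J T p i) (That I (Shat J T p) p j) :=
                Finset.sum_comm
        have h1 : ∑ j, (E I J j (T j) - E I J j (That I (Shat J T p) p j))
            ≤ ∑ j, ∑ b, |E I J j b| :=
          Finset.sum_le_sum fun j _ => diff_le_sum_abs (fun b => E I J j b) _ _
        have h2 : ∑ j, ((kI:ℝ)⁻¹ * ∑ i ∈ I, Wrand ω p i j * Γ (Shat J T p i) (T j)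
            - (kI:ℝ)⁻¹ * ∑ i ∈ I,
                Wrand ω p i j * Γ (Shat J T p i) (That I (Shat J T p) p j)) ≤ 0 := by
          rw [Finset.sum_sub_distrib]
          exact sub_nonpos.mpr hoptz
        rw [e2, Finset.sum_add_distrib]
        have := mul_le_mul_of_nonneg_left (add_le_add h1 h2)
          (by positivity : (0:ℝ) ≤ (n:ℝ)⁻¹)
        simpa using this
      have step3 : fv p (Shat J T p) (That I (Shat J T p) p) ≤ gfun I J p := by
        rw [gfun_eq I J p]
        have hmem : (Shat J T p, T) ∈ QμF ×ˢ QνF := by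
          rw [Finset.mem_product]
          exact ⟨by rw [hQμF, Finset.mem_filter]; exact ⟨Finset.mem_univ _, hSmem J T p⟩,
            by rw [hQνF, Finset.mem_filter]; exact ⟨Finset.mem_univ _, hT⟩⟩
        exact Finset.le_sup' (fun QR => fv p (Shat J QR.2 p) (That I QR.1 p)) hmem
      linarith [step1, step2, step3]
    have avgJ : ∀ (i : Fin m) (a : Fin K),
        ∑ J ∈ PJ, |D i a J| ≤ (PJ.card : ℝ) / Real.sqrt kJ := by
      intro i a
      have hb : ∀ j, |x i a j| ≤ 1 := fun j => habs1 p i j a (T j)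
      have h := sample_bound hn hkJ (x i a) hb
      simpa [hD, hPJ] using h
    have avgI : ∀ (J : Finset (Fin n)) (j : Fin n) (b : Fin K),
        ∑ I ∈ PI, |E I J j b| ≤ (PI.card : ℝ) / Real.sqrt kI := by
      intro J j b
      have hb : ∀ i, |Wrand ω p i j * Γ (Shat J T p i) b| ≤ 1 := fun i => habs1 p i j _ b
      have h := sample_bound hm hkI (fun i => Wrand ω p i j * Γ (Shat J T p i) b) hb
      simpa [hE, hPI] using h
    have hB1 : ∑ J ∈ PJ, ((m:ℝ)⁻¹ * ∑ i, ∑ a, |D i a J|)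
        ≤ (K:ℝ) * ((PJ.card : ℝ) / Real.sqrt kJ) := by
      rw [← Finset.mul_sum, Finset.sum_comm]
      have hle : ∑ i : Fin m, ∑ J ∈ PJ, ∑ a, |D i a J|
          ≤ ∑ _i : Fin m, ((K:ℝ) * ((PJ.card : ℝ) / Real.sqrt kJ)) := by
        refine Finset.sum_le_sum fun i _ => ?_
        rw [Finset.sum_comm]
        calc ∑ a, ∑ J ∈ PJ, |D i a J| ≤ ∑ _a : Fin K, ((PJ.card : ℝ) / Real.sqrt kJ) :=
              Finset.sum_le_sum fun a _ => avgJ i a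
          _ = (K:ℝ) * ((PJ.card : ℝ) / Real.sqrt kJ) := by
              rw [Finset.sum_const, Finset.card_univ, Fintype.card_fin, nsmul_eq_mul]
      calc (m:ℝ)⁻¹ * ∑ i : Fin m, ∑ J ∈ PJ, ∑ a, |D i a J|
          ≤ (m:ℝ)⁻¹ * ∑ _i : Fin m, ((K:ℝ) * ((PJ.card : ℝ) / Real.sqrt kJ)) :=
            mul_le_mul_of_nonneg_left hle (by positivity)
        _ = (K:ℝ) * ((PJ.card : ℝ) / Real.sqrt kJ) := by
            rw [Finset.sum_const, Finset.card_univ, Fintype.card_fin, nsmul_eq_mul,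
              ← mul_assoc, inv_mul_cancel₀ (Nat.cast_ne_zero.mpr hm.ne'), one_mul]
    have hB2 : ∀ J : Finset (Fin n), ∑ I ∈ PI, ((n:ℝ)⁻¹ * ∑ j, ∑ b, |E I J j b|)
        ≤ (K:ℝ) * ((PI.card : ℝ) / Real.sqrt kI) := by
      intro J
      rw [← Finset.mul_sum, Finset.sum_comm]
      have hle : ∑ j : Fin n, ∑ I ∈ PI, ∑ b, |E I J j b|
          ≤ ∑ _j : Fin n, ((K:ℝ) * ((PI.card : ℝ) / Real.sqrt kI)) := by
        refine Finset.sum_le_sum fun j _ => ?_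
        rw [Finset.sum_comm]
        calc ∑ b, ∑ I ∈ PI, |E I J j b| ≤ ∑ _b : Fin K, ((PI.card : ℝ) / Real.sqrt kI) :=
              Finset.sum_le_sum fun b _ => avgI J j b
          _ = (K:ℝ) * ((PI.card : ℝ) / Real.sqrt kI) := by
              rw [Finset.sum_const, Finset.card_univ, Fintype.card_fin, nsmul_eq_mul]
      calc (n:ℝ)⁻¹ * ∑ j : Fin n, ∑ I ∈ PI, ∑ b, |E I J j b|
          ≤ (n:ℝ)⁻¹ * ∑ _j : Fin n, ((K:ℝ) * ((PI.card : ℝ) / Real.sqrt kI)) :=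
            mul_le_mul_of_nonneg_left hle (by positivity)
        _ = (K:ℝ) * ((PI.card : ℝ) / Real.sqrt kI) := by
            rw [Finset.sum_const, Finset.card_univ, Fintype.card_fin, nsmul_eq_mul,
              ← mul_assoc, inv_mul_cancel₀ (Nat.cast_ne_zero.mpr hn.ne'), one_mul]
    have total : (PI.card : ℝ) * (PJ.card : ℝ) * fv p S T
        ≤ (∑ I ∈ PI, ∑ J ∈ PJ, gfun I J p)
          + (PI.card : ℝ) * ((K:ℝ) * ((PJ.card : ℝ) / Real.sqrt kJ))
          + (PJ.card : ℝ) * ((K:ℝ) * ((PI.card : ℝ) / Real.sqrt kI)) := by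
      have hsum : ∑ I ∈ PI, ∑ J ∈ PJ, fv p S T
          ≤ ∑ I ∈ PI, ∑ J ∈ PJ, (gfun I J p + (m:ℝ)⁻¹ * ∑ i, ∑ a, |D i a J|
            + (n:ℝ)⁻¹ * ∑ j, ∑ b, |E I J j b|) :=
        Finset.sum_le_sum fun I hI => Finset.sum_le_sum fun J hJ => claim I hI J hJ
      have hconst : ∑ I ∈ PI, ∑ J ∈ PJ, fv p S T
          = (PI.card : ℝ) * (PJ.card : ℝ) * fv p S T := by
        rw [Finset.sum_const, Finset.sum_const, nsmul_eq_mul, nsmul_eq_mul]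
        ring
      have hsplit : ∑ I ∈ PI, ∑ J ∈ PJ, (gfun I J p + (m:ℝ)⁻¹ * ∑ i, ∑ a, |D i a J|
            + (n:ℝ)⁻¹ * ∑ j, ∑ b, |E I J j b|)
          = (∑ I ∈ PI, ∑ J ∈ PJ, gfun I J p)
            + (∑ I ∈ PI, ∑ J ∈ PJ, ((m:ℝ)⁻¹ * ∑ i, ∑ a, |D i a J|))
            + (∑ I ∈ PI, ∑ J ∈ PJ, ((n:ℝ)⁻¹ * ∑ j, ∑ b, |E I J j b|)) := by
        rw [← Finset.sum_add_distrib, ← Finset.sum_add_distrib]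
        refine Finset.sum_congr rfl fun I _ => ?_
        rw [← Finset.sum_add_distrib, ← Finset.sum_add_distrib]
      have hb1 : ∑ I ∈ PI, ∑ J ∈ PJ, ((m:ℝ)⁻¹ * ∑ i, ∑ a, |D i a J|)
          ≤ (PI.card : ℝ) * ((K:ℝ) * ((PJ.card : ℝ) / Real.sqrt kJ)) := by
        calc ∑ I ∈ PI, ∑ J ∈ PJ, ((m:ℝ)⁻¹ * ∑ i, ∑ a, |D i a J|)
            ≤ ∑ _I ∈ PI, ((K:ℝ) * ((PJ.card : ℝ) / Real.sqrt kJ)) :=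
              Finset.sum_le_sum fun I _ => hB1
          _ = (PI.card : ℝ) * ((K:ℝ) * ((PJ.card : ℝ) / Real.sqrt kJ)) := by
              rw [Finset.sum_const, nsmul_eq_mul]
      have hb2 : ∑ I ∈ PI, ∑ J ∈ PJ, ((n:ℝ)⁻¹ * ∑ j, ∑ b, |E I J j b|)
          ≤ (PJ.card : ℝ) * ((K:ℝ) * ((PI.card : ℝ) / Real.sqrt kI)) := by
        rw [Finset.sum_comm]
        calc ∑ J ∈ PJ, ∑ I ∈ PI, ((n:ℝ)⁻¹ * ∑ j, ∑ b, |E I J j b|)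
            ≤ ∑ _J ∈ PJ, ((K:ℝ) * ((PI.card : ℝ) / Real.sqrt kI)) :=
              Finset.sum_le_sum fun J _ => hB2 J
          _ = (PJ.card : ℝ) * ((K:ℝ) * ((PI.card : ℝ) / Real.sqrt kI)) := by
              rw [Finset.sum_const, nsmul_eq_mul]
      calc (PI.card : ℝ) * (PJ.card : ℝ) * fv p S T
          = ∑ I ∈ PI, ∑ J ∈ PJ, fv p S T := hconst.symm
        _ ≤ ∑ I ∈ PI, ∑ J ∈ PJ, (gfun I J p + (m:ℝ)⁻¹ * ∑ i, ∑ a, |D i a J|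
            + (n:ℝ)⁻¹ * ∑ j, ∑ b, |E I J j b|) := hsum
        _ = _ := hsplit
        _ ≤ _ := add_le_add (add_le_add le_rfl hb1) hb2
    have hNN : (0:ℝ) < (PI.card : ℝ) * (PJ.card : ℝ) := mul_pos hNIR hNJR
    have h1 : fv p S T = ((PI.card : ℝ) * (PJ.card : ℝ))⁻¹
        * ((PI.card : ℝ) * (PJ.card : ℝ) * fv p S T) := by
      rw [← mul_assoc, inv_mul_cancel₀ hNN.ne', one_mul]
    rw [h1]
    calc ((PI.card : ℝ) * (PJ.card : ℝ))⁻¹ * ((PI.card : ℝ) * (PJ.card : ℝ) * fv p S T)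
        ≤ ((PI.card : ℝ) * (PJ.card : ℝ))⁻¹ * ((∑ I ∈ PI, ∑ J ∈ PJ, gfun I J p)
          + (PI.card : ℝ) * ((K:ℝ) * ((PJ.card : ℝ) / Real.sqrt kJ))
          + (PJ.card : ℝ) * ((K:ℝ) * ((PI.card : ℝ) / Real.sqrt kI))) :=
          mul_le_mul_of_nonneg_left total (inv_nonneg.mpr hNN.le)
      _ = ((PI.card : ℝ) * (PJ.card : ℝ))⁻¹ * (∑ I ∈ PI, ∑ J ∈ PJ, gfun I J p)
          + ((K:ℝ) * (Real.sqrt kI)⁻¹ + (K:ℝ) * (Real.sqrt kJ)⁻¹) := by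
        have e2 : ((PI.card : ℝ) * (PJ.card : ℝ))⁻¹
            * ((PI.card : ℝ) * ((K:ℝ) * ((PJ.card : ℝ) / Real.sqrt kJ)))
            = (K:ℝ) * (Real.sqrt kJ)⁻¹ := by
          rw [div_eq_mul_inv, show ((PI.card : ℝ) * (PJ.card : ℝ))⁻¹
              * ((PI.card : ℝ) * ((K:ℝ) * ((PJ.card : ℝ) * (Real.sqrt kJ)⁻¹)))
              = ((PI.card : ℝ)⁻¹ * PI.card) * ((PJ.card : ℝ)⁻¹ * PJ.card) * ((K:ℝ) * (Real.sqrt kJ)⁻¹)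
              by rw [mul_inv]; ring, inv_mul_cancel₀ hNIR.ne', inv_mul_cancel₀ hNJR.ne', one_mul, one_mul]
        have e3 : ((PI.card : ℝ) * (PJ.card : ℝ))⁻¹
            * ((PJ.card : ℝ) * ((K:ℝ) * ((PI.card : ℝ) / Real.sqrt kI)))
            = (K:ℝ) * (Real.sqrt kI)⁻¹ := by
          rw [div_eq_mul_inv, show ((PI.card : ℝ) * (PJ.card : ℝ))⁻¹
              * ((PJ.card : ℝ) * ((K:ℝ) * ((PI.card : ℝ) * (Real.sqrt kI)⁻¹)))
              = ((PI.card : ℝ)⁻¹ * PI.card) * ((PJ.card : ℝ)⁻¹ * PJ.card) * ((K:ℝ) * (Real.sqrt kI)⁻¹)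
              by rw [mul_inv]; ring, inv_mul_cancel₀ hNIR.ne', inv_mul_cancel₀ hNJR.ne', one_mul, one_mul]
        rw [mul_add, mul_add, e2, e3]
        ring
  -- conclude by integration
  have int_sum : Integrable (fun p => ∑ I ∈ PI, ∑ J ∈ PJ, gfun I J p) (pspace m n) :=
    integrable_finset_sum _ fun I _ => integrable_finset_sum _ fun J _ => int_g I J
  have int_rhs : Integrable (fun p => ((PI.card : ℝ) * (PJ.card : ℝ))⁻¹
      * (∑ I ∈ PI, ∑ J ∈ PJ, gfun I J p)
      + ((K:ℝ) * (Real.sqrt kI)⁻¹ + (K:ℝ) * (Real.sqrt kJ)⁻¹)) (pspace m n) :=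
    (int_sum.const_mul _).add (integrable_const _)
  calc ∫ p, suppFn (FMat (Wrand ω p) μ ν) Γ ∂(pspace m n)
      ≤ ∫ p, (((PI.card : ℝ) * (PJ.card : ℝ))⁻¹ * (∑ I ∈ PI, ∑ J ∈ PJ, gfun I J p)
          + ((K:ℝ) * (Real.sqrt kI)⁻¹ + (K:ℝ) * (Real.sqrt kJ)⁻¹)) ∂(pspace m n) :=
        integral_mono int_supp int_rhs main
    _ = ((PI.card : ℝ) * (PJ.card : ℝ))⁻¹
          * (∑ I ∈ PI, ∑ J ∈ PJ, ∫ p, gfun I J p ∂(pspace m n))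
        + ((K:ℝ) * (Real.sqrt kI)⁻¹ + (K:ℝ) * (Real.sqrt kJ)⁻¹) := by
      rw [integral_add (int_sum.const_mul _) (integrable_const _), integral_const,
        probReal_univ, one_smul]
      congr 1
      rw [integral_const_mul]
      congr 1
      rw [integral_finset_sum _ fun I _ => integrable_finset_sum _ fun J _ => int_g I J]
      exact Finset.sum_congr rfl fun I _ => integral_finset_sum _ fun J _ => int_g I J
    _ ≤ ((PI.card : ℝ) * (PJ.card : ℝ))⁻¹
          * (∑ I ∈ PI, ∑ J ∈ PJ, ∫ p, gfun I J p ∂(pspace m n))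
        + (K:ℝ) * Real.sqrt (2 * Real.pi)
            * ((kI : ℝ) ^ (-(1/2 : ℝ)) + (kJ : ℝ) ^ (-(1/2 : ℝ))) := by
      have hrI : (kI : ℝ) ^ (-(1/2 : ℝ)) = (Real.sqrt kI)⁻¹ := by
        rw [Real.rpow_neg (by positivity), ← Real.sqrt_eq_rpow]
      have hrJ : (kJ : ℝ) ^ (-(1/2 : ℝ)) = (Real.sqrt kJ)⁻¹ := by
        rw [Real.rpow_neg (by positivity), ← Real.sqrt_eq_rpow]
      have h2pi : (1:ℝ) ≤ Real.sqrt (2 * Real.pi) := by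
        rw [show (1:ℝ) = Real.sqrt 1 from (Real.sqrt_one).symm]
        exact Real.sqrt_le_sqrt (by nlinarith [Real.pi_gt_three])
      rw [hrI, hrJ]
      have hKnn : (0:ℝ) ≤ (K:ℝ) := by positivity
      have hi1 : (0:ℝ) ≤ (Real.sqrt kI)⁻¹ := by positivity
      have hi2 : (0:ℝ) ≤ (Real.sqrt kJ)⁻¹ := by positivity
      have hcmp : (K:ℝ) * (Real.sqrt kI)⁻¹ + (K:ℝ) * (Real.sqrt kJ)⁻¹
          ≤ (K:ℝ) * Real.sqrt (2 * Real.pi) * ((Real.sqrt kI)⁻¹ + (Real.sqrt kJ)⁻¹) := by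
        have h := mul_le_mul_of_nonneg_right h2pi
          (mul_nonneg hKnn (add_nonneg hi1 hi2))
        nlinarith [h]
      linarith [hcmp]
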